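/- Suppose 𝒮^inv and 𝒮^res are orthogonal linear subspaces with 𝒮^inv ⊕ 𝒮^res = ℝ^p and Π_{𝒮^inv} Σ_t Π_{𝒮^res} = 0 for all t ∈ T, suppose 𝒮^inv is opt-invariant on T with common maximizer β^inv (so that β^inv = Π_{𝒮^inv}γ_t for all t ∈ T), and let U^res be a matrix whose columns form an orthonormal basis of 𝒮^res. Then for every t ∈ T, the matrix (U^res)ᵀ Σ_t U^res is positive definite and the residual component δ_t := Π_{𝒮^res} γ_t satisfies δ_t = U^res ((U^res)ᵀ Σ_t U^res)^{-1} (U^res)ᵀ Σ_t (γ_t − β^inv). (In the paper's notation, δ_t^res = U^res Var((U^res)ᵀX_t)^{-1} Cov((U^res)ᵀX_t, Y_t − X_tᵀβ^inv).) -/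

import Mathlib

open Matrix Finset MeasureTheory

noncomputable section

/-- Vectors in `ℝ^p`. -/
abbrev Vec (p : ℕ) : Type := Fin p → ℝ

/-- Real `p × p` matrices. -/
abbrev Mat (p : ℕ) : Type := Matrix (Fin p) (Fin p) ℝ

/-- Explained variance `ΔVar(β) = 2 γᵀ C β − βᵀ C β` at a time with covariance `C`
and true parameter `γ`. -/
def dVar {p : ℕ} (C : Mat p) (γ β : Vec p) : ℝ :=
  2 * (γ ⬝ᵥ (C *ᵥ β)) - β ⬝ᵥ (C *ᵥ β)

/-- `β₀` is the unique maximizer of `f` over the linear subspace whose orthogonal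
projection matrix is `P` (membership in the subspace is expressed as `P *ᵥ β = β`). -/
def IsUMaxOn {p : ℕ} (f : Vec p → ℝ) (P : Mat p) (β₀ : Vec p) : Prop :=
  P *ᵥ β₀ = β₀ ∧ ∀ β : Vec p, P *ᵥ β = β → β ≠ β₀ → f β < f β₀

/-- The matrices `P j` are the orthogonal projection matrices of a family of pairwise
orthogonal nonzero linear subspaces of `ℝ^p` whose direct sum is `ℝ^p`. -/
structure OrthPartition (p q : ℕ) (P : Fin q → Mat p) : Prop where
  symm : ∀ j, (P j)ᵀ = P j
  idem : ∀ j, P j * P j = P j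
  nonzero : ∀ j, P j ≠ 0
  orth : ∀ i j, i ≠ j → P i * P j = 0
  sum_one : ∑ j, P j = 1

/-- Equation (11) of the paper: with `U^res` a matrix whose columns
form an orthonormal basis of `𝒮^res`, the matrix `(U^res)ᵀ Σ_t U^res` is positive
definite and the residual component `δ_t = Π_{𝒮^res} γ_t` satisfies
`δ_t = U^res ((U^res)ᵀ Σ_t U^res)⁻¹ (U^res)ᵀ Σ_t (γ_t − β^inv)`. -/
theorem stmt18 {p n k : ℕ} (hp : 1 ≤ p) (hn : 1 ≤ n)
    (Cov : Fin n → Mat p) (hCov : ∀ t, (Cov t).PosDef)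
    (γ : Fin n → Vec p)
    (Pinv Pres : Mat p)
    (hsymm₁ : Pinvᵀ = Pinv) (hidem₁ : Pinv * Pinv = Pinv)
    (hsymm₂ : Presᵀ = Pres) (hidem₂ : Pres * Pres = Pres)
    (horth : Pinv * Pres = 0)
    (hsum : Pinv + Pres = 1)
    (hdec : ∀ t : Fin n, Pinv * Cov t * Pres = 0)
    (βinv : Vec p)
    (hopt : ∀ t : Fin n, IsUMaxOn (dVar (Cov t) (γ t)) Pinv βinv)
    (Ures : Matrix (Fin p) (Fin k) ℝ)
    (hUres₁ : Uresᵀ * Ures = 1)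
    (hUres₂ : Ures * Uresᵀ = Pres) :
    ∀ t : Fin n,
      (Uresᵀ * Cov t * Ures).PosDef ∧
      Pres *ᵥ γ t
        = Ures *ᵥ ((Uresᵀ * Cov t * Ures)⁻¹ *ᵥ
            (Uresᵀ *ᵥ ((Cov t) *ᵥ (γ t - βinv)))) := by
  intro t
  have hC := hCov t
  have hCsymm : (Cov t)ᵀ = Cov t := by
    have := hC.isHermitian
    rwa [Matrix.IsHermitian, Matrix.conjTranspose_eq_transpose_of_trivial] at this
  have hUinj : ∀ x : Vec k, Ures *ᵥ x = 0 → x = 0 := by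
    intro x hx
    have : Uresᵀ *ᵥ (Ures *ᵥ x) = 0 := by rw [hx, Matrix.mulVec_zero]
    rwa [Matrix.mulVec_mulVec, hUres₁, Matrix.one_mulVec] at this
  have hpd : (Uresᵀ * Cov t * Ures).PosDef := by
    refine Matrix.posDef_iff_dotProduct_mulVec.mpr ⟨?_, ?_⟩
    · show (Uresᵀ * Cov t * Ures)ᴴ = _
      rw [Matrix.conjTranspose_eq_transpose_of_trivial, Matrix.transpose_mul,
        Matrix.transpose_mul, Matrix.transpose_transpose, hCsymm, Matrix.mul_assoc]
    · intro x hx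
      have hUx : Ures *ᵥ x ≠ 0 := fun h => hx (hUinj x h)
      have hpos := hC.dotProduct_mulVec_pos hUx
      have hstar : (star x : Vec k) = x := by funext i; simp
      have hstar2 : (star (Ures *ᵥ x) : Vec p) = Ures *ᵥ x := by funext i; simp
      rw [hstar2] at hpos
      rw [hstar]
      have key : x ⬝ᵥ ((Uresᵀ * Cov t * Ures) *ᵥ x)
          = (Ures *ᵥ x) ⬝ᵥ (Cov t *ᵥ (Ures *ᵥ x)) := by
        rw [Matrix.mul_assoc, ← Matrix.mulVec_mulVec, Matrix.dotProduct_mulVec x Uresᵀ,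
          Matrix.vecMul_transpose, Matrix.mulVec_mulVec, ← Matrix.mulVec_mulVec]
      rw [key]; exact hpos
  refine ⟨hpd, ?_⟩
  have hUP : Uresᵀ * Pres = Uresᵀ := by
    rw [← hUres₂, ← Matrix.mul_assoc, hUres₁, Matrix.one_mul]
  have hresCinv : Pres * Cov t * Pinv = 0 := by
    have := congrArg Matrix.transpose (hdec t)
    simpa [Matrix.transpose_mul, hsymm₁, hsymm₂, hCsymm, Matrix.mul_assoc] using this
  have hUCPinv : Uresᵀ * Cov t * Pinv = 0 := by
    conv_lhs => rw [← hUP]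
    rw [Matrix.mul_assoc Uresᵀ Pres (Cov t), Matrix.mul_assoc Uresᵀ (Pres * Cov t) Pinv,
      hresCinv, Matrix.mul_zero]
  have hβ : Pinv *ᵥ βinv = βinv := (hopt t).1
  have hUCβ : Uresᵀ *ᵥ (Cov t *ᵥ βinv) = 0 := by
    rw [← hβ, Matrix.mulVec_mulVec, Matrix.mulVec_mulVec, hUCPinv, Matrix.zero_mulVec]
  have hUCγ : Uresᵀ *ᵥ (Cov t *ᵥ γ t) = (Uresᵀ * Cov t * Ures) *ᵥ (Uresᵀ *ᵥ γ t) := by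
    have hsplit : Uresᵀ * Cov t = Uresᵀ * Cov t * Pres + Uresᵀ * Cov t * Pinv := by
      rw [← Matrix.mul_add, add_comm Pres Pinv, hsum, Matrix.mul_one]
    rw [Matrix.mulVec_mulVec, Matrix.mulVec_mulVec, Matrix.mul_assoc (Uresᵀ * Cov t) Ures Uresᵀ,
      hUres₂]
    conv_lhs => rw [hsplit, hUCPinv, add_zero, Matrix.mul_assoc]
    rw [← Matrix.mul_assoc]
  have hunit : IsUnit (Uresᵀ * Cov t * Ures).det :=
    Matrix.isUnit_iff_isUnit_det _ |>.1 hpd.isUnit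
  rw [Matrix.mulVec_sub, Matrix.mulVec_sub, hUCβ, sub_zero, hUCγ,
    Matrix.mulVec_mulVec (Uresᵀ *ᵥ γ t) ((Uresᵀ * Cov t * Ures)⁻¹) (Uresᵀ * Cov t * Ures),
    Matrix.nonsing_inv_mul _ hunit, Matrix.one_mulVec, Matrix.mulVec_mulVec, hUres₂]
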